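/- The function f21(p,q) = log p + p(1-p)q - log(1 - p + p·exp(p(1-p)q)) is strictly increasing in p ∈ (0,1) for every fixed q ∈ (0,1), and strictly increasing in q ∈ (0,1) for every fixed p ∈ (0,1). -/

import Mathlib

noncomputable def f21 (p q : ℝ) : ℝ :=
  Real.log p + p * (1 - p) * q - Real.log (1 - p + p * Real.exp (p * (1 - p) * q))

lemma f21_eq (p q : ℝ) (hp : 0 < p) (hp1 : p < 1) :
    f21 p q = -Real.log (1 + Real.exp (Real.log (1-p) - Real.log p - q*(p - p^2))) := by
  have h1p : (0:ℝ) < 1 - p := by linarith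
  set x := p * (1 - p) * q with hx
  have hA : 0 < p + (1 - p) * Real.exp (-x) := by positivity
  have hexpφ : Real.exp (Real.log (1-p) - Real.log p - q*(p-p^2))
      = (1-p)/p * Real.exp (-x) := by
    rw [show Real.log (1-p) - Real.log p - q*(p-p^2)
        = (Real.log (1-p) - Real.log p) + (-x) by rw [hx]; ring,
      Real.exp_add, Real.exp_sub, Real.exp_log h1p, Real.exp_log hp]
  have h2 : 1 + (1-p)/p * Real.exp (-x) = (p + (1-p)*Real.exp (-x)) / p := by
    field_simp
  have h3 : 1 - p + p * Real.exp x = Real.exp x * (p + (1-p)*Real.exp (-x)) := by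
    rw [Real.exp_neg]
    field_simp
    ring
  unfold f21
  rw [hexpφ, h2, Real.log_div hA.ne' hp.ne', h3,
      Real.log_mul (Real.exp_ne_zero x) hA.ne', Real.log_exp]
  ring

lemma phi_strictAnti (q : ℝ) (hq : 0 < q) (hq1 : q < 1) :
    StrictAntiOn (fun p => Real.log (1-p) - Real.log p - q*(p - p^2)) (Set.Ioo (0:ℝ) 1) := by
  apply strictAntiOn_of_deriv_neg (convex_Ioo 0 1)
  · intro p hp
    obtain ⟨hp0, hp1⟩ := hp
    have h1p : (0:ℝ) < 1 - p := by linarith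
    exact ((((Real.continuousAt_log h1p.ne').comp (by fun_prop)).sub
      (Real.continuousAt_log hp0.ne')).sub (by fun_prop)).continuousWithinAt
  · intro p hp
    rw [interior_Ioo] at hp
    obtain ⟨hp0, hp1⟩ := hp
    have h1p : (0:ℝ) < 1 - p := by linarith
    have hd : HasDerivAt (fun p => Real.log (1-p) - Real.log p - q*(p - p^2))
        ((1-p)⁻¹ * (-1) - p⁻¹ - q*(1 - 2*p)) p := by
      have d1 : HasDerivAt (fun y : ℝ => Real.log (1 - y)) ((1-p)⁻¹ * (-1)) p := by
        exact (Real.hasDerivAt_log h1p.ne').comp p ((hasDerivAt_id p).const_sub 1)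
      have d2 : HasDerivAt (fun y : ℝ => q * (y - y^2)) (q * (1 - 2*p)) p := by
        have : HasDerivAt (fun y : ℝ => q * (y - y^2)) (q * (1 - ((2:ℕ):ℝ) * p^(2-1))) p :=
          ((hasDerivAt_id p).sub (hasDerivAt_pow 2 p)).const_mul q
        convert this using 1
        simp
      exact (d1.sub (Real.hasDerivAt_log hp0.ne')).sub d2
    rw [hd.deriv]
    have hi1 : (1:ℝ) < p⁻¹ := (one_lt_inv₀ hp0).2 hp1
    have hi2 : (1:ℝ) < (1-p)⁻¹ := (one_lt_inv₀ h1p).2 (by linarith)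
    have hb : q * (1 - 2*p) ≥ -q := by nlinarith
    linarith

theorem f21_strictMono_in_each_variable :
    (∀ q ∈ Set.Ioo (0 : ℝ) 1, StrictMonoOn (fun p => f21 p q) (Set.Ioo (0 : ℝ) 1)) ∧
    (∀ p ∈ Set.Ioo (0 : ℝ) 1, StrictMonoOn (fun q => f21 p q) (Set.Ioo (0 : ℝ) 1)) := by
  constructor
  · rintro q ⟨hq0, hq1⟩ p1 hp1 p2 hp2 h12
    show f21 p1 q < f21 p2 q
    rw [f21_eq p1 q hp1.1 hp1.2, f21_eq p2 q hp2.1 hp2.2]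
    have := phi_strictAnti q hq0 hq1 hp1 hp2 h12
    have hpos : 0 < 1 + Real.exp (Real.log (1-p2) - Real.log p2 - q*(p2 - p2^2)) := by positivity
    have := Real.exp_lt_exp.2 this
    exact neg_lt_neg (Real.log_lt_log hpos (by linarith))
  · rintro p ⟨hp0, hp1⟩ q1 hq1 q2 hq2 h12
    show f21 p q1 < f21 p q2
    rw [f21_eq p q1 hp0 hp1, f21_eq p q2 hp0 hp1]
    have ha : 0 < p - p^2 := by nlinarith
    have harg : Real.log (1-p) - Real.log p - q2*(p - p^2)
        < Real.log (1-p) - Real.log p - q1*(p - p^2) := by nlinarith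
    have hpos : 0 < 1 + Real.exp (Real.log (1-p) - Real.log p - q2*(p - p^2)) := by positivity
    have := Real.exp_lt_exp.2 harg
    exact neg_lt_neg (Real.log_lt_log hpos (by linarith))
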